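/- Let R be a commutative ring, m ≥ 2, n > m, and let X ∈ M_{m×m}(R), α₁, α₂ ∈ M_{m×(n−m)}(R). Then the matrices obtained by the column operations α₁ ↦ α₁ + X(α₂ − α₁) and α₂ ↦ α₂ + (I_m − X)(α₁ − α₂) are equal: α₁ + X(α₂ − α₁) = α₂ + (I_m − X)(α₁ − α₂). Consequently, for S = (X, α₁) and T = (I_m − X, α₂) in Um_{m,n}(R), there exist ε₁, ε₂ ∈ E_n(R) and α ∈ M_{m×(n−m)}(R) with Sε₁ = (X, α) and Tε₂ = (I_m − X, α). -/

import Mathlib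

/-- A row `v` of length `n` over a commutative ring is *unimodular* if there is a row `w`
with `∑ i, v i * w i = 1`. -/
def IsUnimodular {R : Type*} [CommRing R] {n : ℕ} (v : Fin n → R) : Prop :=
  ∃ w : Fin n → R, ∑ i, v i * w i = 1

/-- `ε` lies in the elementary group `E_n(R)`, i.e. the (sub)group of `GL_n(R)` generated by
the elementary matrices `e_{ij}(λ) = I + λ E_{ij}` (`i ≠ j`).  Since the generating set is
closed under inverses, this coincides with the multiplicative closure. -/
def IsElementary {R : Type*} [CommRing R] {n : ℕ} (ε : Matrix (Fin n) (Fin n) R) : Prop :=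
  ε ∈ Submonoid.closure {M : Matrix (Fin n) (Fin n) R |
    ∃ (i j : Fin n) (c : R), i ≠ j ∧ M = Matrix.transvection i j c}

/-- An `m × n` matrix is right invertible (i.e. lies in `Um_{m,n}(R)`) if it has a right
inverse. -/
def RightInvertible {R : Type*} [CommRing R] {m n : ℕ} (A : Matrix (Fin m) (Fin n) R) : Prop :=
  ∃ B : Matrix (Fin n) (Fin m) R, A * B = 1

/-- The stable range condition `sr_k(R)`. -/
def SRCond (R : Type*) [CommRing R] (k : ℕ) : Prop :=
  ∀ a : Fin (k + 1) → R, IsUnimodular a →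
    ∃ c : Fin k → R, IsUnimodular (fun i : Fin k => a i.castSucc + c i * a (Fin.last k))

/-- The `m × (p + q)` matrix `(X, α)` whose first `p` columns form `X` and whose last `q`
columns form `α`. -/
def appendCols {R : Type*} [CommRing R] {m p q : ℕ}
    (X : Matrix (Fin m) (Fin p) R) (α : Matrix (Fin m) (Fin q) R) :
    Matrix (Fin m) (Fin (p + q)) R :=
  Matrix.of fun i => Fin.append (X i) (α i)

namespace ColOps

open Matrix Finset

variable {R : Type*} [CommRing R] {m k : ℕ}

lemma mul_stdBasisMatrix_apply {ι κ : Type*} [Fintype κ] [DecidableEq κ]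
    (A : Matrix ι κ R) (i' j' : κ) (c : R) (a : ι) (b : κ) :
    (A * Matrix.single i' j' c) a b = if b = j' then A a i' * c else 0 := by
  simp only [Matrix.mul_apply, Matrix.single, Matrix.of_apply, mul_ite, mul_zero, ite_and]
  rw [Finset.sum_ite_eq Finset.univ i' fun x => if j' = b then A a x * c else 0]
  simp [eq_comm]

lemma castAdd_ne_natAdd (i : Fin m) (j : Fin k) :
    (Fin.castAdd k i : Fin (m + k)) ≠ Fin.natAdd m j := by
  intro h
  have := congrArg Fin.val h
  simp only [Fin.coe_castAdd, Fin.coe_natAdd] at this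
  omega

lemma natAdd_inj {j j' : Fin k} (h : (Fin.natAdd m j : Fin (m + k)) = Fin.natAdd m j') :
    j = j' := by
  have := congrArg Fin.val h
  simp only [Fin.coe_natAdd] at this
  exact Fin.ext (by omega)

lemma elem_sum (B : Matrix (Fin m) (Fin k) R) (s : Finset (Fin m × Fin k)) :
    IsElementary (1 + ∑ p ∈ s,
      Matrix.single (Fin.castAdd k p.1) (Fin.natAdd m p.2) (B p.1 p.2)) := by
  classical
  induction s using Finset.induction_on with
  | empty => simp only [Finset.sum_empty, add_zero]; exact Submonoid.one_mem _
  | insert a s ha ih =>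
    rw [Finset.sum_insert ha]
    have hz : Matrix.single (Fin.castAdd k a.1) (Fin.natAdd m a.2) (B a.1 a.2) *
        (∑ p ∈ s, Matrix.single (Fin.castAdd k p.1) (Fin.natAdd m p.2) (B p.1 p.2)) = 0 := by
      rw [Finset.mul_sum]
      refine Finset.sum_eq_zero fun p _ => ?_
      exact Matrix.single_mul_single_of_ne (h := fun h => castAdd_ne_natAdd p.1 a.2 h.symm) ..
    have key : (1 + Matrix.single (Fin.castAdd k a.1) (Fin.natAdd m a.2) (B a.1 a.2)) *
        (1 + ∑ p ∈ s, Matrix.single (Fin.castAdd k p.1) (Fin.natAdd m p.2) (B p.1 p.2)) =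
        1 + (Matrix.single (Fin.castAdd k a.1) (Fin.natAdd m a.2) (B a.1 a.2) +
          ∑ p ∈ s, Matrix.single (Fin.castAdd k p.1) (Fin.natAdd m p.2) (B p.1 p.2)) := by
      simp only [Matrix.mul_add, Matrix.add_mul, Matrix.one_mul, Matrix.mul_one, hz, add_zero,
        add_assoc]
    rw [← key]
    exact Submonoid.mul_mem _
      (Submonoid.subset_closure ⟨_, _, B a.1 a.2, castAdd_ne_natAdd a.1 a.2, rfl⟩) ih

lemma mul_blockE (X : Matrix (Fin m) (Fin m) R) (α B : Matrix (Fin m) (Fin k) R) :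
    appendCols X α * (1 + ∑ p : Fin m × Fin k,
      Matrix.single (Fin.castAdd k p.1) (Fin.natAdd m p.2) (B p.1 p.2)) =
    appendCols X (α + X * B) := by
  ext i j
  rw [Matrix.mul_add, Matrix.mul_one, Matrix.mul_sum]
  refine Fin.addCases (fun q => ?_) (fun q => ?_) j
  · simp only [Matrix.add_apply, Matrix.sum_apply]
    rw [Finset.sum_eq_zero, add_zero]
    · simp [appendCols, Fin.append_left]
    · intro p _
      rw [mul_stdBasisMatrix_apply, if_neg (castAdd_ne_natAdd q p.2)]
  · simp only [Matrix.add_apply, Matrix.sum_apply]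
    rw [Fintype.sum_prod_type]
    have hsum : ∀ p1 : Fin m, ∑ p2 : Fin k,
        (appendCols X α * Matrix.single (Fin.castAdd k p1) (Fin.natAdd m p2) (B p1 p2)) i
          (Fin.natAdd m q) = X i p1 * B p1 q := by
      intro p1
      rw [Finset.sum_eq_single q]
      · rw [mul_stdBasisMatrix_apply, if_pos rfl]
        congr 1
        simp [appendCols, Fin.append_left]
      · intro b _ hb
        rw [mul_stdBasisMatrix_apply, if_neg (fun h => hb (natAdd_inj h).symm)]
      · simp
    simp only [hsum]
    simp [appendCols, Fin.append_right, Matrix.mul_apply, Matrix.add_apply]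

end ColOps

/-- The column operations `α₁ ↦ α₁ + X(α₂ − α₁)` and `α₂ ↦ α₂ + (I_m − X)(α₁ − α₂)` produce
equal matrices; consequently, for `S = (X, α₁)` and `T = (I_m − X, α₂)` in `Um_{m,n}(R)`
(`n = m + k`), there are `ε₁, ε₂ ∈ E_n(R)` and `α` with `Sε₁ = (X, α)`,
`Tε₂ = (I_m − X, α)`. -/
theorem column_operations_equalize {R : Type*} [CommRing R]
    (m k : ℕ) (hm : 2 ≤ m) (hk : 1 ≤ k)
    (X : Matrix (Fin m) (Fin m) R) (α₁ α₂ : Matrix (Fin m) (Fin k) R)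
    (hS : RightInvertible (appendCols X α₁))
    (hT : RightInvertible (appendCols (1 - X) α₂)) :
    α₁ + X * (α₂ - α₁) = α₂ + (1 - X) * (α₁ - α₂) ∧
    ∃ (ε₁ ε₂ : Matrix (Fin (m + k)) (Fin (m + k)) R) (α : Matrix (Fin m) (Fin k) R),
      IsElementary ε₁ ∧ IsElementary ε₂ ∧
      appendCols X α₁ * ε₁ = appendCols X α ∧
      appendCols (1 - X) α₂ * ε₂ = appendCols (1 - X) α := by
  have h1 : α₁ + X * (α₂ - α₁) = α₂ + (1 - X) * (α₁ - α₂) := by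
    simp only [Matrix.mul_sub, Matrix.sub_mul, Matrix.one_mul]; abel
  refine ⟨h1, ?_⟩
  refine ⟨1 + ∑ p : Fin m × Fin k,
      Matrix.single (Fin.castAdd k p.1) (Fin.natAdd m p.2) ((α₂ - α₁) p.1 p.2),
    1 + ∑ p : Fin m × Fin k,
      Matrix.single (Fin.castAdd k p.1) (Fin.natAdd m p.2) ((α₁ - α₂) p.1 p.2),
    α₁ + X * (α₂ - α₁), ColOps.elem_sum _ _, ColOps.elem_sum _ _, ColOps.mul_blockE X α₁ _, ?_⟩
  rw [ColOps.mul_blockE, ← h1]
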